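/- Fix a radius R with R > 1 and R·α_j < 1 for all 1 ≤ j ≤ t₁, and define for n, x ∈ ℤ: F_n^{α,β,γ}(x,t) = ((−1)^n/(2πi))∮_{|w|=R} (1−w)^{-n} · w^{-(x-n+1)} · f_{α,β,γ}(w,t) dw. Then for all n, x ∈ ℤ the series Σ_{y ≥ x} F_n^{α,β,γ}(y,t) converges absolutely and F_{n+1}^{α,β,γ}(x,t) = Σ_{y ≥ x} F_n^{α,β,γ}(y,t). -/

import Mathlib

/-- `(1/(2πi)) ∮_{|w|=R} F(w) dw`, the normalized contour integral over the
positively oriented circle of radius `R` centered at `0` in `ℂ`. -/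
noncomputable def cInt (R : ℝ) (F : ℂ → ℂ) : ℂ :=
  (2 * (Real.pi : ℂ) * Complex.I)⁻¹ * ∮ w in C(0, R), F w

/-- The function `f_{α,β,γ}(w,t) = ∏_{j=1}^{t₁} (1−α_j)/(1−α_j w) ·
∏_{j=t₁+1}^{t₁+t₂} (1+β_j w)/(1+β_j) · exp(γ t₃ (w−1))`. -/
noncomputable def fabc (t₁ t₂ : ℕ) (t₃ γ : ℝ) (α β : ℕ → ℝ) (w : ℂ) : ℂ :=
  (∏ j ∈ Finset.Icc 1 t₁, (1 - (α j : ℂ)) / (1 - (α j : ℂ) * w)) *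
  (∏ j ∈ Finset.Icc (t₁ + 1) (t₁ + t₂), (1 + (β j : ℂ) * w) / (1 + (β j : ℂ))) *
  Complex.exp ((γ : ℂ) * (t₃ : ℂ) * (w - 1))

/-- `F_n^{α,β,γ}(x,t) = ((−1)^n/(2πi))∮_{|w|=R} (1−w)^{-n} w^{-(x-n+1)}
f_{α,β,γ}(w,t) dw`, the function in the determinantal transition probability
of the mixed TASEP. -/
noncomputable def Fabc (t₁ t₂ : ℕ) (t₃ γ : ℝ) (α β : ℕ → ℝ) (R : ℝ) (n x : ℤ) : ℂ :=
  (-1 : ℂ) ^ n * cInt R (fun w =>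
    (1 - w) ^ (-n) * w ^ (-(x - n + 1)) * fabc t₁ t₂ t₃ γ α β w)

open MeasureTheory Metric in
/-- The series `Σ_{y ≥ x} F_n^{α,β,γ}(y,t)` converges absolutely and equals
`F_{n+1}^{α,β,γ}(x,t)`. -/
theorem statement9 (t₁ t₂ : ℕ) (t₃ γ : ℝ) (ht₃ : 0 ≤ t₃) (hγ : 0 ≤ γ)
    (α β : ℕ → ℝ)
    (hα : ∀ j ∈ Finset.Icc 1 t₁, 0 ≤ α j ∧ α j < 1)
    (hβ : ∀ j ∈ Finset.Icc (t₁ + 1) (t₁ + t₂), 0 ≤ β j)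
    (R : ℝ) (hR : 1 < R) (hRα : ∀ j ∈ Finset.Icc 1 t₁, R * α j < 1)
    (n x : ℤ) :
    Summable (fun k : ℕ => ‖Fabc t₁ t₂ t₃ γ α β R n (x + k)‖) ∧
    Fabc t₁ t₂ t₃ γ α β R (n + 1) x = ∑' k : ℕ, Fabc t₁ t₂ t₃ γ α β R n (x + k) := by
  have hR0 : (0:ℝ) < R := lt_trans one_pos hR
  -- basic nonvanishing facts on the circle
  have hwR : ∀ w ∈ sphere (0:ℂ) R, ‖w‖ = R := fun w hw => mem_sphere_zero_iff_norm.mp hw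
  have hw0 : ∀ w ∈ sphere (0:ℂ) R, w ≠ 0 := by
    intro w hw h
    rw [h] at hw
    have := hwR 0 hw
    simp at this
    exact absurd this.symm (ne_of_gt hR0)
  have hw1 : ∀ w ∈ sphere (0:ℂ) R, (1:ℂ) - w ≠ 0 := by
    intro w hw h
    have hw' : w = 1 := by linear_combination -h
    rw [hw'] at hw
    have := hwR 1 hw
    simp at this
    exact absurd this (ne_of_lt hR)
  have hαw : ∀ j ∈ Finset.Icc 1 t₁, ∀ w ∈ sphere (0:ℂ) R, (1:ℂ) - (α j : ℂ) * w ≠ 0 := by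
    intro j hj w hw h
    have h1 : (α j : ℂ) * w = 1 := by linear_combination -h
    have h2 : ‖(α j : ℂ) * w‖ = 1 := by rw [h1]; simp
    rw [norm_mul, Complex.norm_real, hwR w hw, Real.norm_eq_abs,
      abs_of_nonneg (hα j hj).1] at h2
    have := hRα j hj
    nlinarith
  -- continuity of fabc on the sphere
  have hf_cont : ContinuousOn (fabc t₁ t₂ t₃ γ α β) (sphere (0:ℂ) R) := by
    apply ContinuousOn.mul
    apply ContinuousOn.mul
    · apply continuousOn_finset_prod
      intro j hj
      exact continuousOn_const.div
        ((continuous_const.sub (continuous_const.mul continuous_id)).continuousOn)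
        (fun w hw => hαw j hj w hw)
    · exact Continuous.continuousOn (by fun_prop)
    · exact Continuous.continuousOn (by fun_prop)
  -- the fixed part of the integrand
  set h : ℂ → ℂ := fun w =>
    (1 - w) ^ (-n) * w ^ (-(x - n + 1)) * fabc t₁ t₂ t₃ γ α β w with hh_def
  have hh_cont : ContinuousOn h (sphere (0:ℂ) R) := by
    apply ContinuousOn.mul
    apply ContinuousOn.mul
    · exact ContinuousOn.zpow₀ (continuous_const.sub continuous_id).continuousOn _
        (fun w hw => Or.inl (hw1 w hw))
    · exact ContinuousOn.zpow₀ continuousOn_id _ (fun w hw => Or.inl (hw0 w hw))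
    · exact hf_cont
  obtain ⟨B, hB⟩ := (isCompact_sphere (0:ℂ) R).exists_bound_of_continuousOn hh_cont
  have hB0 : 0 ≤ B := by
    have hRmem : (R:ℂ) ∈ sphere (0:ℂ) R := by
      simp [mem_sphere_zero_iff_norm, abs_of_pos hR0]
    exact le_trans (norm_nonneg _) (hB _ hRmem)
  -- the k-th integrand
  set g : ℕ → ℂ → ℂ := fun k w => h w * (w⁻¹) ^ k with hg_def
  have hg_eq : ∀ (k : ℕ), ∀ w ∈ sphere (0:ℂ) R,
      (1 - w) ^ (-n) * w ^ (-(x + (k:ℤ) - n + 1)) * fabc t₁ t₂ t₃ γ α β w = g k w := by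
    intro k w hw
    have hz : w ^ (-(x + (k:ℤ) - n + 1)) = w ^ (-(x - n + 1)) * (w⁻¹) ^ k := by
      rw [inv_pow, ← zpow_natCast w k, ← zpow_neg, ← zpow_add₀ (hw0 w hw)]
      congr 1; ring
    rw [hz, hg_def, hh_def]; ring
  have hg_norm : ∀ (k : ℕ), ∀ w ∈ sphere (0:ℂ) R, ‖g k w‖ ≤ B * (R⁻¹) ^ k := by
    intro k w hw
    rw [hg_def]
    simp only [norm_mul, norm_pow, norm_inv, hwR w hw]
    exact mul_le_mul_of_nonneg_right (hB w hw)
      (pow_nonneg (inv_nonneg.mpr hR0.le) k)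
  have hπ : (2 * (Real.pi:ℂ) * Complex.I) ≠ 0 := by
    simp [Real.pi_ne_zero, Complex.I_ne_zero]
  -- rewrite Fabc through g
  have hFabc_eq : ∀ k : ℕ, Fabc t₁ t₂ t₃ γ α β R n (x + k) =
      (-1:ℂ)^n * ((2 * (Real.pi:ℂ) * Complex.I)⁻¹ * ∮ w in C(0,R), g k w) := by
    intro k
    unfold Fabc cInt
    congr 2
    exact circleIntegral.integral_congr hR0.le (fun w hw => hg_eq k w hw)
  have hFle : ∀ k : ℕ, ‖Fabc t₁ t₂ t₃ γ α β R n (x + k)‖ ≤ R * (B * (R⁻¹)^k) := by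
    intro k
    rw [hFabc_eq k, norm_mul]
    have h1 : ‖(-1:ℂ)^n‖ = 1 := by rw [norm_zpow]; simp
    rw [h1, one_mul, ← smul_eq_mul]
    exact circleIntegral.norm_two_pi_i_inv_smul_integral_le_of_norm_le_const hR0.le
      (hg_norm k)
  have hsum_geom : Summable (fun k : ℕ => R * (B * (R⁻¹)^k)) := by
    exact ((summable_geometric_of_lt_one (inv_nonneg.mpr hR0.le)
      (inv_lt_one_of_one_lt₀ hR)).mul_left B).mul_left R
  have hsum1 : Summable (fun k : ℕ => ‖Fabc t₁ t₂ t₃ γ α β R n (x + k)‖) :=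
    Summable.of_nonneg_of_le (fun k => norm_nonneg _) hFle hsum_geom
  refine ⟨hsum1, ?_⟩
  -- Part 2: the identity
  set G : ℕ → ℝ → ℂ := fun k θ =>
    deriv (circleMap 0 R) θ • g k (circleMap 0 R θ) with hG_def
  have hmem : ∀ θ : ℝ, circleMap 0 R θ ∈ sphere (0:ℂ) R :=
    fun θ => circleMap_mem_sphere 0 hR0.le θ
  have hDnorm : ∀ θ : ℝ, ‖deriv (circleMap 0 R) θ‖ = R := by
    intro θ
    rw [deriv_circleMap, norm_mul, Complex.norm_I, mul_one]
    simpa using hwR _ (hmem θ)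
  have hgk_cont : ∀ k : ℕ, ContinuousOn (g k) (sphere (0:ℂ) R) := by
    intro k
    exact hh_cont.mul ((continuousOn_id.inv₀ hw0).pow k)
  have hGcont : ∀ k : ℕ, Continuous (G k) := by
    intro k
    refine Continuous.smul (f := fun θ => deriv (circleMap 0 R) θ)
      (g := fun θ => g k (circleMap 0 R θ)) ?_ ?_
    · exact ((continuous_circleMap 0 R).mul continuous_const).congr
        (fun θ => (deriv_circleMap _ _ _).symm)
    · exact (hgk_cont k).comp_continuous (continuous_circleMap 0 R) hmem
  have hGint : ∀ k : ℕ, IntegrableOn (G k) (Set.Ioc 0 (2*Real.pi)) :=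
    fun k => (hGcont k).integrableOn_Ioc
  have hGbound : ∀ (k : ℕ) (θ : ℝ), ‖G k θ‖ ≤ R * (B * (R⁻¹)^k) := by
    intro k θ
    rw [hG_def]
    simp only [norm_smul, hDnorm θ]
    exact mul_le_mul_of_nonneg_left (hg_norm k _ (hmem θ)) hR0.le
  have hGnorm_int : ∀ k : ℕ, (∫ θ in Set.Ioc 0 (2*Real.pi), ‖G k θ‖) ≤
      (2*Real.pi) * (R * (B * (R⁻¹)^k)) := by
    intro k
    have hci : IntegrableOn (fun _ : ℝ => R * (B * (R⁻¹)^k)) (Set.Ioc 0 (2*Real.pi)) :=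
      (integrableOn_const_iff).mpr (Or.inr measure_Ioc_lt_top)
    calc (∫ θ in Set.Ioc 0 (2*Real.pi), ‖G k θ‖)
        ≤ ∫ _ in Set.Ioc 0 (2*Real.pi), R * (B * (R⁻¹)^k) :=
          setIntegral_mono_on ((hGint k).norm) hci measurableSet_Ioc
            (fun θ _ => hGbound k θ)
      _ = (2*Real.pi) * (R * (B * (R⁻¹)^k)) := by
          rw [setIntegral_const, measureReal_def, Real.volume_Ioc, smul_eq_mul, sub_zero,
            ENNReal.toReal_ofReal Real.two_pi_pos.le]
  have hGsum : Summable (fun k : ℕ => ∫ θ in Set.Ioc 0 (2*Real.pi), ‖G k θ‖) := by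
    exact Summable.of_nonneg_of_le (fun k => integral_nonneg (fun θ => norm_nonneg _))
      hGnorm_int (hsum_geom.mul_left (2*Real.pi))
  have hswap : ∑' k : ℕ, (∫ θ in Set.Ioc 0 (2*Real.pi), G k θ) =
      ∫ θ in Set.Ioc 0 (2*Real.pi), ∑' k : ℕ, G k θ :=
    MeasureTheory.integral_tsum_of_summable_integral_norm (fun k => hGint k) hGsum
  -- circle integral as the set integral
  have hcirc : ∀ k : ℕ, (∮ w in C(0,R), g k w) = ∫ θ in Set.Ioc 0 (2*Real.pi), G k θ := by
    intro k
    rw [circleIntegral, intervalIntegral.integral_of_le Real.two_pi_pos.le]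
  -- pointwise sum of the geometric series
  have hinv_lt : ∀ θ : ℝ, ‖(circleMap 0 R θ)⁻¹‖ < 1 := by
    intro θ
    rw [norm_inv, hwR _ (hmem θ)]
    exact inv_lt_one_of_one_lt₀ hR
  -- key algebraic identity on the sphere
  have hkey : ∀ w ∈ sphere (0:ℂ) R,
      h w * (1 - w⁻¹)⁻¹ =
      -((1 - w) ^ (-(n+1)) * w ^ (-(x - (n+1) + 1)) * fabc t₁ t₂ t₃ γ α β w) := by
    intro w hw
    have h0 := hw0 w hw
    have h1 := hw1 w hw
    have e1 : (1 - w⁻¹)⁻¹ = -w * (1 - w)⁻¹ := by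
      apply inv_eq_of_mul_eq_one_right
      field_simp
      ring
    have e2 : (1 - w) ^ (-(n+1)) = (1 - w) ^ (-n) * (1 - w)⁻¹ := by
      rw [← zpow_sub_one₀ h1]
      congr 1; ring
    have e3 : w ^ (-(x - (n+1) + 1)) = w ^ (-(x - n + 1)) * w := by
      rw [← zpow_add_one₀ h0]
      congr 1; ring
    rw [hh_def, e1, e2, e3]
    ring
  have hpt : ∀ θ : ℝ, ∑' k : ℕ, G k θ =
      -(deriv (circleMap 0 R) θ •
        ((1 - circleMap 0 R θ) ^ (-(n+1)) * (circleMap 0 R θ) ^ (-(x - (n+1) + 1)) *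
          fabc t₁ t₂ t₃ γ α β (circleMap 0 R θ))) := by
    intro θ
    set w := circleMap 0 R θ with hwdef
    have : ∀ k : ℕ, G k θ = (deriv (circleMap 0 R) θ * h w) * (w⁻¹) ^ k := by
      intro k
      simp only [hG_def, hg_def, smul_eq_mul]
      ring
    rw [tsum_congr this, tsum_mul_left, tsum_geometric_of_norm_lt_one (hinv_lt θ),
      smul_eq_mul, mul_assoc, hkey w (hmem θ)]
    ring
  -- assemble
  have htsum : ∑' k : ℕ, Fabc t₁ t₂ t₃ γ α β R n (x + k) =
      (-1:ℂ)^n * ((2 * (Real.pi:ℂ) * Complex.I)⁻¹ *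
        ∑' k : ℕ, (∫ θ in Set.Ioc 0 (2*Real.pi), G k θ)) := by
    rw [← tsum_mul_left, ← tsum_mul_left]
    apply tsum_congr
    intro k
    rw [hFabc_eq k, hcirc k]
  have hfin : ∫ θ in Set.Ioc 0 (2*Real.pi), (∑' k : ℕ, G k θ) =
      -(∮ w in C(0,R), (1 - w) ^ (-(n+1)) * w ^ (-(x - (n+1) + 1)) *
          fabc t₁ t₂ t₃ γ α β w) := by
    rw [circleIntegral, intervalIntegral.integral_of_le Real.two_pi_pos.le, ← integral_neg]
    exact setIntegral_congr_fun measurableSet_Ioc (fun θ _ => by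
      rw [hpt θ])
  rw [htsum, hswap, hfin]
  unfold Fabc cInt
  have hm1 : (-1:ℂ)^(n+1) = (-1:ℂ)^n * (-1) := zpow_add_one₀ (by norm_num) n
  rw [hm1]
  ring
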